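/- Suppose n ≥ 4 is an integer and the partition function p(n) satisfies μ(n) + log(√3/(12n) - √3/(12 n^{3/2})) < log(p(n)) < μ(n) + log(√3/(12n) + √3/(12 n^{3/2})), where μ(n) = (π/6)√(24n-1). Then |log(p(n)) - ((π√24/6)·√n - log(n) + log(√3/12))| ≤ 4/√n. -/

import Mathlib

open Real

set_option maxHeartbeats 1000000 in
theorem log_partition_approx (n : ℕ) (hn : 4 ≤ n)
    (h1 : π / 6 * Real.sqrt (24 * n - 1) +
        Real.log (Real.sqrt 3 / (12 * n) - Real.sqrt 3 / (12 * (n : ℝ) ^ ((3 : ℝ) / 2))) <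
      Real.log (Fintype.card (Nat.Partition n)))
    (h2 : Real.log (Fintype.card (Nat.Partition n)) <
      π / 6 * Real.sqrt (24 * n - 1) +
        Real.log (Real.sqrt 3 / (12 * n) + Real.sqrt 3 / (12 * (n : ℝ) ^ ((3 : ℝ) / 2)))) :
    |Real.log (Fintype.card (Nat.Partition n)) -
        (π * Real.sqrt 24 / 6 * Real.sqrt n - Real.log n + Real.log (Real.sqrt 3 / 12))| ≤
      4 / Real.sqrt n := by
  have hn0 : (0:ℝ) < n := by exact_mod_cast Nat.lt_of_lt_of_le (by norm_num) hn
  set s := Real.sqrt n with hs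
  have hs2 : (2:ℝ) ≤ s := by
    have h4 : Real.sqrt 4 = 2 := by
      rw [show (4:ℝ) = 2^2 by norm_num, Real.sqrt_sq (by norm_num)]
    rw [hs, ← h4]
    exact Real.sqrt_le_sqrt (by exact_mod_cast hn)
  have hs0 : 0 < s := lt_of_lt_of_le two_pos hs2
  have hsn : s^2 = n := Real.sq_sqrt hn0.le
  have h32 : (n:ℝ)^((3:ℝ)/2) = n * s := by
    rw [show (3:ℝ)/2 = 1 + 1/2 by norm_num, Real.rpow_add hn0, Real.rpow_one,
      ← Real.sqrt_eq_rpow]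
  have h3pos : (0:ℝ) < Real.sqrt 3 := Real.sqrt_pos.mpr (by norm_num)
  have h1s : 1/s ≤ 1/2 := one_div_le_one_div_of_le two_pos hs2
  have h1s0 : 0 < 1 - 1/s := by linarith
  have hEp : Real.sqrt 3 / (12*(n:ℝ)) + Real.sqrt 3/(12*(n:ℝ)^((3:ℝ)/2))
      = (Real.sqrt 3/12) * (1/n) * (1 + 1/s) := by
    rw [h32]; field_simp
  have hEm : Real.sqrt 3 / (12*(n:ℝ)) - Real.sqrt 3/(12*(n:ℝ)^((3:ℝ)/2))
      = (Real.sqrt 3/12) * (1/n) * (1 - 1/s) := by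
    rw [h32]; field_simp
  have hlogp : Real.log ((Real.sqrt 3/12) * (1/(n:ℝ)) * (1+1/s))
      = Real.log (Real.sqrt 3/12) - Real.log n + Real.log (1+1/s) := by
    rw [Real.log_mul (by positivity) (by positivity),
      Real.log_mul (by positivity) (by positivity), one_div, Real.log_inv]
    ring
  have hlogm : Real.log ((Real.sqrt 3/12) * (1/(n:ℝ)) * (1-1/s))
      = Real.log (Real.sqrt 3/12) - Real.log n + Real.log (1-1/s) := by
    rw [Real.log_mul (by positivity) h1s0.ne',
      Real.log_mul (by positivity) (by positivity), one_div, Real.log_inv]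
    ring
  -- log bounds
  have hup : Real.log (1+1/s) ≤ 1/s := by
    have := Real.log_le_sub_one_of_pos (show (0:ℝ) < 1+1/s by positivity)
    linarith
  have hlow : -Real.log (1-1/s) ≤ 2/s := by
    have hle := Real.log_le_sub_one_of_pos (show (0:ℝ) < (1-1/s)⁻¹ by positivity)
    rw [Real.log_inv] at hle
    have hmul : (1-1/s) * (1-1/s)⁻¹ = 1 := mul_inv_cancel₀ h1s0.ne'
    have hi : (1-1/s)⁻¹ ≤ 2 := by nlinarith [inv_pos.mpr h1s0]
    have h2s : (1:ℝ)/s + 1/s = 2/s := by ring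
    nlinarith [mul_nonneg (le_of_lt (show (0:ℝ) < 1/s by positivity))
      (by linarith : (0:ℝ) ≤ 2 - (1-1/s)⁻¹)]
  -- sqrt comparisons
  set t := Real.sqrt (24*(n:ℝ)-1) with htdef
  set u := Real.sqrt (24*(n:ℝ)) with hudef
  have ht0 : 0 ≤ t := Real.sqrt_nonneg _
  have ht2 : t^2 = 24*(n:ℝ)-1 := Real.sq_sqrt (by nlinarith)
  have hu2 : u^2 = 24*(n:ℝ) := Real.sq_sqrt (by positivity)
  have htu : t ≤ u := Real.sqrt_le_sqrt (by linarith)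
  have hueq : u = Real.sqrt 24 * s := by
    rw [hudef, hs, Real.sqrt_mul (by norm_num)]
  have h24 : (4:ℝ) ≤ Real.sqrt 24 := by
    rw [show (4:ℝ) = Real.sqrt 16 by
      rw [show (16:ℝ) = 4^2 by norm_num, Real.sqrt_sq (by norm_num)]]
    exact Real.sqrt_le_sqrt (by norm_num)
  have hu4s : 4*s ≤ u := by
    rw [hueq]; nlinarith
  have hkey : (u - t) * (4*s) ≤ 1 := by
    nlinarith [mul_nonneg (sub_nonneg.mpr htu) (by linarith : (0:ℝ) ≤ u + t - 4*s)]
  have hdiff : u - t ≤ 1/(4*s) := by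
    rw [le_div_iff₀ (by positivity)]; exact hkey
  have hpi4 : π ≤ 4 := Real.pi_le_four
  have hpi0 : 0 < π := Real.pi_pos
  have hmu : π/6 * (u - t) ≤ 1/s := by
    have h1 : π/6 * (u - t) ≤ 4/6 * (1/(4*s)) := by
      apply mul_le_mul (by linarith) hdiff (by linarith) (by norm_num)
    have he : 4/6 * (1/(4*s)) = 1/(6*s) := by field_simp
    have : (1:ℝ)/(6*s) ≤ 1/s := one_div_le_one_div_of_le hs0 (by linarith)
    rw [he] at h1
    linarith
  rw [hEp, hlogp] at h2
  rw [hEm, hlogm] at h1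
  have hA : π * Real.sqrt 24 / 6 * s = π/6 * u := by rw [hueq]; ring
  have hsi : (0:ℝ) < 1/s := by positivity
  have he2 : (2:ℝ)/s = 2*(1/s) := by ring
  have he4 : (4:ℝ)/s = 4*(1/s) := by ring
  rw [abs_le]
  constructor
  · have hlog1s : Real.log (1-1/s) ≥ -(2/s) := by linarith
    rw [hA]
    linarith
  · rw [hA]
    have : π/6 * t ≤ π/6 * u := by nlinarith
    linarith
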